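/- Let Λ ⊂ ℤ \ {0} be quasi-independent. Then for any finitely supported complex sequence (xₙ)_{n∈Λ}, ∫₀^{2π} exp(Re(Σ_{n∈Λ} xₙ e^{int})/2) dt/(2π) ≤ exp(Σ|xₙ|²/2); i.e., the character system {e^{int} : n ∈ Λ} is subgaussian with constant at most 2. -/

import Mathlib

/-- A set `Λ ⊆ ℤ` is quasi-independent if the only relation
`∑ ξ_n · n = 0` with coefficients `ξ_n ∈ {-1,0,1}` supported on a finite
subset of `Λ` is the trivial one. -/
def QuasiIndependent (Λ : Set ℤ) : Prop :=
  ∀ F : Finset ℤ, ↑F ⊆ Λ → ∀ ξ : ℤ → ℤ,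
    (∀ n, ξ n ∈ ({-1, 0, 1} : Set ℤ)) →
    ∑ n ∈ F, ξ n * n = 0 → ∀ n ∈ F, ξ n = 0

private lemma exp_half_le (u r : ℝ) (hr : 0 ≤ r) (hu : |u| ≤ r) :
    Real.exp (u / 2) ≤ Real.cosh (r / 2) + u * (Real.sinh (r / 2) / r) := by
  rcases eq_or_lt_of_le hr with h | h
  · have hu0 : u = 0 := by
      have := abs_nonneg u
      have : |u| = 0 := le_antisymm (h ▸ hu) this
      exact abs_eq_zero.mp this
    simp [hu0, ← h]
  · have hr' : r ≠ 0 := ne_of_gt h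
    have hc1 : -1 ≤ u / r := by
      rw [le_div_iff₀ h]; nlinarith [neg_abs_le u]
    have hc2 : u / r ≤ 1 := by
      rw [div_le_one h]; exact le_trans (le_abs_self u) hu
    have key := convexOn_exp.2 (Set.mem_univ (-(r/2))) (Set.mem_univ (r/2))
      (show (0:ℝ) ≤ (1 - u/r)/2 by linarith)
      (show (0:ℝ) ≤ (1 + u/r)/2 by linarith)
      (by ring)
    simp only [smul_eq_mul] at key
    have h1 : (1 - u/r)/2 * (-(r/2)) + (1 + u/r)/2 * (r/2) = u / 2 := by
      field_simp; ring
    rw [h1] at key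
    refine key.trans (le_of_eq ?_)
    rw [Real.cosh_eq, Real.sinh_eq]
    field_simp
    ring

private lemma exp_orth (M : ℤ) :
    (∫ t in (0:ℝ)..(2*Real.pi), Complex.exp (Complex.I * M * t))
      = if M = 0 then (2*Real.pi : ℂ) else 0 := by
  split_ifs with h
  · simp [h]
  · have hc : Complex.I * (M:ℂ) ≠ 0 := by
      simp [Complex.I_ne_zero, Complex.ext_iff]
      exact_mod_cast h
    have := integral_exp_mul_complex (a := (0:ℝ)) (b := 2*Real.pi) hc
    simp only [mul_assoc] at this ⊢
    rw [this]
    have h1 : Complex.I * ((M:ℂ) * ((2*Real.pi : ℝ):ℂ)) = (M:ℂ) * (2*Real.pi*Complex.I) := by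
      push_cast; ring
    rw [h1, Complex.exp_int_mul_two_pi_mul_I]
    simp

private lemma riesz (Λ : Set ℤ) (hqi : QuasiIndependent Λ) (F : Finset ℤ) (hF : ↑F ⊆ Λ)
    (c : ℤ → ℤ → ℂ) :
    (∫ t in (0:ℝ)..(2*Real.pi), ∏ n ∈ F,
        ∑ e ∈ ({-1,0,1} : Finset ℤ), c n e * Complex.exp (Complex.I * ((e*n : ℤ) : ℂ) * t))
      = 2*Real.pi * ∏ n ∈ F, c n 0 := by
  classical
  have hexp : ∀ t : ℝ, (∏ n ∈ F, ∑ e ∈ ({-1,0,1} : Finset ℤ),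
        c n e * Complex.exp (Complex.I * ((e*n : ℤ) : ℂ) * t))
      = ∑ p ∈ F.pi (fun _ => ({-1,0,1} : Finset ℤ)),
          (∏ n ∈ F.attach, c n.1 (p n.1 n.2)) *
            Complex.exp (Complex.I * ((∑ n ∈ F.attach, p n.1 n.2 * n.1 : ℤ) : ℂ) * t) := by
    intro t
    rw [Finset.prod_sum]
    refine Finset.sum_congr rfl fun p hp => ?_
    rw [Finset.prod_mul_distrib]
    congr 1
    rw [← Complex.exp_sum]
    congr 1
    push_cast
    rw [Finset.mul_sum, Finset.sum_mul]
  rw [intervalIntegral.integral_congr (g := fun t => ∑ p ∈ F.pi (fun _ => ({-1,0,1} : Finset ℤ)),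
          (∏ n ∈ F.attach, c n.1 (p n.1 n.2)) *
            Complex.exp (Complex.I * ((∑ n ∈ F.attach, p n.1 n.2 * n.1 : ℤ) : ℂ) * t))
      (fun t _ => hexp t)]
  rw [intervalIntegral.integral_finset_sum (fun p _ => by
    apply Continuous.intervalIntegrable
    fun_prop)]
  have hterm : ∀ p ∈ F.pi (fun _ => ({-1,0,1} : Finset ℤ)),
      (∫ t in (0:ℝ)..(2*Real.pi), (∏ n ∈ F.attach, c n.1 (p n.1 n.2)) *
          Complex.exp (Complex.I * ((∑ n ∈ F.attach, p n.1 n.2 * n.1 : ℤ) : ℂ) * t))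
        = (∏ n ∈ F.attach, c n.1 (p n.1 n.2)) *
            (if (∑ n ∈ F.attach, p n.1 n.2 * n.1 : ℤ) = 0 then (2*Real.pi : ℂ) else 0) := by
    intro p _
    rw [intervalIntegral.integral_const_mul, exp_orth]
  rw [Finset.sum_congr rfl hterm]
  rw [Finset.sum_eq_single_of_mem (fun n _ => (0:ℤ)) (by simp [Finset.mem_pi]) ?zero]
  case zero =>
    intro p hp hne
    have hM : (∑ n ∈ F.attach, p n.1 n.2 * n.1 : ℤ) ≠ 0 := by
      intro hM0
      apply hne
      set ξ : ℤ → ℤ := fun n => if h : n ∈ F then p n h else 0 with hξ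
      have hξmem : ∀ n, ξ n ∈ ({-1,0,1} : Set ℤ) := by
        intro n; by_cases h : n ∈ F
        · have := (Finset.mem_pi.mp hp) n h
          simp only [hξ, dif_pos h]
          simpa using this
        · simp [hξ, dif_neg h]
      have hsum : ∑ n ∈ F, ξ n * n = 0 := by
        rw [← Finset.sum_attach F (fun n => ξ n * n), ← hM0]
        refine Finset.sum_congr rfl fun n _ => ?_
        simp [hξ, dif_pos n.2]
      have hz := hqi F hF ξ hξmem hsum
      funext n hn
      have := hz n hn
      simpa [hξ, dif_pos hn] using this
    rw [if_neg hM, mul_zero]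
  · rw [if_pos (by simp), Finset.prod_attach F (fun n => c n 0)]
    ring

private lemma hE3 (f : ℤ → ℂ) : ∑ e ∈ ({-1,0,1} : Finset ℤ), f e = f (-1) + f 0 + f 1 := by
  rw [show ({-1,0,1} : Finset ℤ) = insert (-1) (insert 0 {1}) from rfl,
    Finset.sum_insert (by decide), Finset.sum_insert (by decide), Finset.sum_singleton]
  ring

theorem quasiindependent_subgaussian
    (Λ : Set ℤ) (h0 : (0 : ℤ) ∉ Λ) (hqi : QuasiIndependent Λ) :
    ∀ F : Finset ℤ, ↑F ⊆ Λ → ∀ x : ℤ → ℂ,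
      (2 * Real.pi)⁻¹ *
          ∫ t in (0 : ℝ)..(2 * Real.pi),
            Real.exp ((∑ n ∈ F, x n * Complex.exp (Complex.I * n * t)).re / 2)
        ≤ Real.exp (∑ n ∈ F, ‖x n‖ ^ 2 / 2) := by
  intro F hF x
  classical
  set A : ℤ → ℝ := fun n => ‖x n‖ / 2 with hA
  set S : ℤ → ℝ := fun n => Real.sinh (A n) / ‖x n‖ with hS
  set Q : ℤ → ℝ → ℝ := fun n t =>
    Real.cosh (A n) + (x n * Complex.exp (Complex.I * n * t)).re * S n with hQ
  -- pointwise bound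
  have hpt : ∀ t : ℝ, Real.exp ((∑ n ∈ F, x n * Complex.exp (Complex.I * n * t)).re / 2)
      ≤ ∏ n ∈ F, Q n t := by
    intro t
    rw [Complex.re_sum, Finset.sum_div, Real.exp_sum]
    refine Finset.prod_le_prod (fun n _ => (Real.exp_pos _).le) (fun n _ => ?_)
    have habs : |(x n * Complex.exp (Complex.I * n * t)).re| ≤ ‖x n‖ := by
      refine (Complex.abs_re_le_norm _).trans ?_
      rw [norm_mul, Complex.norm_exp]
      have h1 : (Complex.I * n * t).re = 0 := by simp
      rw [h1, Real.exp_zero, mul_one]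
    exact exp_half_le _ _ (norm_nonneg _) habs
  -- exact value of the Riesz-product integral
  have hint : (∫ t in (0:ℝ)..(2*Real.pi), ∏ n ∈ F, Q n t)
      = 2*Real.pi * ∏ n ∈ F, Real.cosh (A n) := by
    set coef : ℤ → ℤ → ℂ := fun n e => if e = 0 then (Real.cosh (A n) : ℂ)
      else (if e = 1 then x n else (starRingEnd ℂ) (x n)) * (S n : ℂ) / 2 with hcoef
    have key : ∀ (n : ℤ) (t : ℝ), ((Q n t : ℝ) : ℂ)
        = ∑ e ∈ ({-1,0,1} : Finset ℤ),
            coef n e * Complex.exp (Complex.I * ((e*n : ℤ) : ℂ) * t) := by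
      intro n t
      simp only [hQ]
      rw [hE3]
      have e1 : Complex.exp (Complex.I * (((-1)*n : ℤ):ℂ) * t)
          = Complex.exp (-(Complex.I * n * t)) := by congr 1; push_cast; ring
      have e0 : Complex.exp (Complex.I * ((0*n : ℤ):ℂ) * t) = 1 := by norm_num
      have e2 : Complex.exp (Complex.I * ((1*n : ℤ):ℂ) * t)
          = Complex.exp (Complex.I * n * t) := by congr 1; push_cast; ring
      have hconj : (starRingEnd ℂ) (x n * Complex.exp (Complex.I * n * t))
          = (starRingEnd ℂ) (x n) * Complex.exp (-(Complex.I * n * t)) := by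
        rw [map_mul, ← Complex.exp_conj]
        congr 2
        simp [Complex.conj_I]
      have hre : (((x n * Complex.exp (Complex.I * n * t)).re : ℝ) : ℂ)
          = (x n * Complex.exp (Complex.I * n * t)
              + (starRingEnd ℂ) (x n * Complex.exp (Complex.I * n * t))) / 2 := by
        rw [Complex.add_conj]
        push_cast
        ring
      simp only [hcoef, if_neg (by decide : (-1:ℤ) ≠ 0), if_neg (by decide : (1:ℤ) ≠ 0),
        if_neg (by decide : ¬((-1:ℤ) = 1)), if_pos rfl, e1, e0, e2]
      push_cast
      rw [hre, hconj]
      ring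
    have hR := riesz Λ hqi F hF coef
    have h2 : ((∫ t in (0:ℝ)..(2*Real.pi), ∏ n ∈ F, Q n t : ℝ) : ℂ)
        = ((2*Real.pi * ∏ n ∈ F, Real.cosh (A n) : ℝ) : ℂ) := by
      rw [← intervalIntegral.integral_ofReal]
      rw [intervalIntegral.integral_congr (μ := MeasureTheory.volume)
        (g := fun t => ∏ n ∈ F, ∑ e ∈ ({-1,0,1} : Finset ℤ),
            coef n e * Complex.exp (Complex.I * ((e*n : ℤ) : ℂ) * t))
        (fun t _ => by push_cast [key]; rfl)]
      rw [hR]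
      have : ∀ n, coef n 0 = ((Real.cosh (A n) : ℝ) : ℂ) := fun n => by simp [hcoef]
      push_cast [this]
      ring
    exact_mod_cast h2
  -- continuity / integrability
  have hcont1 : Continuous fun t : ℝ =>
      Real.exp ((∑ n ∈ F, x n * Complex.exp (Complex.I * n * t)).re / 2) := by
    fun_prop
  have hcont2 : Continuous fun t : ℝ => ∏ n ∈ F, Q n t := by
    simp only [hQ]
    fun_prop
  have h2pi : (0:ℝ) < 2*Real.pi := by positivity
  calc (2 * Real.pi)⁻¹ *
        ∫ t in (0:ℝ)..(2*Real.pi),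
          Real.exp ((∑ n ∈ F, x n * Complex.exp (Complex.I * n * t)).re / 2)
      ≤ (2 * Real.pi)⁻¹ * ∫ t in (0:ℝ)..(2*Real.pi), ∏ n ∈ F, Q n t := by
        refine mul_le_mul_of_nonneg_left ?_ (by positivity)
        exact intervalIntegral.integral_mono_on h2pi.le
          (hcont1.intervalIntegrable _ _) (hcont2.intervalIntegrable _ _)
          (fun t _ => hpt t)
    _ = ∏ n ∈ F, Real.cosh (A n) := by
        rw [hint, ← mul_assoc, inv_mul_cancel₀ (ne_of_gt h2pi), one_mul]
    _ ≤ ∏ n ∈ F, Real.exp (‖x n‖ ^ 2 / 2) := by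
        refine Finset.prod_le_prod (fun n _ => (Real.cosh_pos _).le) (fun n _ => ?_)
        refine (Real.cosh_le_exp_half_sq (A n)).trans (Real.exp_le_exp.2 ?_)
        rw [hA]
        have := sq_nonneg (‖x n‖)
        nlinarith
    _ = Real.exp (∑ n ∈ F, ‖x n‖ ^ 2 / 2) := (Real.exp_sum _ _).symm
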